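/- For any tree T, the zero forcing number of T is at most the strong metric dimension of T, i.e., Z(T) ≤ sdim(T). -/

import Mathlib

open SimpleGraph

/-- One step of the zero forcing color-change rule: add every white vertex that is
the unique white neighbor of some black vertex. -/
def zfStep {V : Type*} (G : SimpleGraph V) (B : Set V) : Set V :=
  B ∪ {w | ∃ u ∈ B, G.Adj u w ∧ ∀ x, G.Adj u x → x ∉ B → x = w}

/-- `S` is a zero forcing set if iterating the color-change rule blackens all vertices. -/
def IsZeroForcingSet {V : Type*} (G : SimpleGraph V) (S : Set V) : Prop :=
  ∃ n : ℕ, (zfStep G)^[n] S = Set.univ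

/-- The zero forcing number: minimum cardinality of a zero forcing set. -/
noncomputable def zeroForcingNumber {V : Type*} (G : SimpleGraph V) : ℕ :=
  sInf {n | ∃ S : Set V, S.ncard = n ∧ IsZeroForcingSet G S}

/-- A (finite) graph is a path graph: nonempty, connected, acyclic, max degree ≤ 2. -/
def IsPathGraph {V : Type*} (G : SimpleGraph V) : Prop :=
  Nonempty V ∧ G.Connected ∧ G.IsAcyclic ∧ ∀ v : V, (G.neighborSet v).ncard ≤ 2

/-- The path cover number: minimum number of vertex-disjoint induced paths covering `V`. -/
noncomputable def pathCoverNumber {V : Type*} (G : SimpleGraph V) : ℕ :=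
  sInf {n | ∃ P : Finset (Set V), P.card = n ∧
    (∀ S ∈ P, IsPathGraph (G.induce S)) ∧
    (P : Set (Set V)).PairwiseDisjoint id ∧ ⋃₀ (P : Set (Set V)) = Set.univ}

/-- `u` lies on an `x`–`v` geodesic. -/
def LiesBetween {V : Type*} (G : SimpleGraph V) (x u v : V) : Prop :=
  G.dist x u + G.dist u v = G.dist x v

/-- `x` strongly resolves the pair `u, v`. -/
def StronglyResolves {V : Type*} (G : SimpleGraph V) (x u v : V) : Prop :=
  LiesBetween G x u v ∨ LiesBetween G x v u

/-- `W` is a strong resolving set of `G`. -/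
def IsStrongResolvingSet {V : Type*} (G : SimpleGraph V) (W : Set V) : Prop :=
  ∀ u v : V, u ≠ v → ∃ x ∈ W, StronglyResolves G x u v

/-- The strong metric dimension: minimum cardinality of a strong resolving set. -/
noncomputable def sdim {V : Type*} (G : SimpleGraph V) : ℕ :=
  sInf {n | ∃ W : Set V, W.ncard = n ∧ IsStrongResolvingSet G W}

/-- A leaf is a vertex of degree one. -/
def IsLeaf {V : Type*} (G : SimpleGraph V) (v : V) : Prop :=
  (G.neighborSet v).ncard = 1

/-- `σ(G)`: the number of leaves of `G`. -/
noncomputable def leafCount {V : Type*} (G : SimpleGraph V) : ℕ :=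
  {v | IsLeaf G v}.ncard

set_option linter.unusedSectionVars false

section Aux
variable {V : Type*} [DecidableEq V]

/-- Concatenating an edge to a path whose new endpoint is fresh gives a path. -/
lemma zf_isPath_concat {G : SimpleGraph V} {u v w : V} {p : G.Walk u v} (hp : p.IsPath)
    (h : G.Adj v w) (hw : w ∉ p.support) : (p.concat h).IsPath := by
  rw [← Walk.isPath_reverse_iff, Walk.reverse_concat]
  exact hp.reverse.cons (by simpa [Walk.support_reverse] using hw)

/-- A vertex on a geodesic at full distance from the start is the endpoint. -/
lemma zf_eq_end_of_mem_geodesic {G : SimpleGraph V} {ℓ t x : V}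
    {p : G.Walk ℓ t} (hlen : p.length = G.dist ℓ t) (hx : x ∈ p.support)
    (hd : G.dist ℓ x = G.dist ℓ t) : x = t := by
  have h1 : G.dist ℓ x ≤ (p.takeUntil x hx).length := SimpleGraph.dist_le _
  have h3 : (p.takeUntil x hx).length + (p.dropUntil x hx).length = p.length := by
    rw [← Walk.length_append, Walk.take_spec]
  have h4 : (p.dropUntil x hx).length = 0 := by omega
  exact Walk.eq_of_length_eq_zero h4

lemma zf_dist_le_of_adj {G : SimpleGraph V} (hc : G.Connected) (ℓ : V) {u v : V}
    (h : G.Adj u v) : G.dist ℓ v ≤ G.dist ℓ u + 1 := by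
  obtain ⟨p, hp, hl⟩ := hc.exists_path_of_dist ℓ u
  have := SimpleGraph.dist_le (p.concat h)
  rwa [Walk.length_concat, hl] at this

/-- In a tree, a vertex cannot have two distinct neighbors both one step closer to `ℓ`. -/
lemma zf_no_two_parents {G : SimpleGraph V} (hT : G.IsTree) {ℓ b x y : V} {k : ℕ}
    (hxy : x ≠ y) (hbx : G.Adj b x) (hby : G.Adj b y)
    (hx : G.dist ℓ x = k) (hy : G.dist ℓ y = k) (hb : G.dist ℓ b = k + 1) : False := by
  have hc := hT.isConnected
  obtain ⟨px, hpx, hlx⟩ := hc.exists_path_of_dist ℓ x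
  obtain ⟨py, hpy, hly⟩ := hc.exists_path_of_dist ℓ y
  have hbnx : b ∉ px.support := by
    intro hmem
    have h1 : G.dist ℓ b ≤ (px.takeUntil b hmem).length := SimpleGraph.dist_le _
    have h2 := px.length_takeUntil_le hmem
    omega
  have hbny : b ∉ py.support := by
    intro hmem
    have h1 : G.dist ℓ b ≤ (py.takeUntil b hmem).length := SimpleGraph.dist_le _
    have h2 := py.length_takeUntil_le hmem
    omega
  have hp1 : (px.concat hbx.symm).IsPath := zf_isPath_concat hpx hbx.symm hbnx
  have hp2 : (py.concat hby.symm).IsPath := zf_isPath_concat hpy hby.symm hbny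
  have heq : px.concat hbx.symm = py.concat hby.symm := by
    have := hT.IsAcyclic.path_unique ⟨_, hp1⟩ ⟨_, hp2⟩
    exact congrArg Subtype.val this
  have hxs : x ∈ (py.concat hby.symm).support := by
    rw [← heq, Walk.support_concat]
    simp [List.concat_eq_append]
  rw [Walk.support_concat] at hxs
  rw [List.mem_append, List.mem_singleton] at hxs
  rcases hxs with hxs | hxs
  · exact hxy (zf_eq_end_of_mem_geodesic hly hxs (by omega))
  · exact hbx.ne' hxs

/-- In a tree, adjacent vertices are at different distances from any root. -/
lemma zf_dist_ne_of_adj {G : SimpleGraph V} (hT : G.IsTree) (ℓ : V) {u v : V}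
    (h : G.Adj u v) : G.dist ℓ u ≠ G.dist ℓ v := by
  intro he
  have hc := hT.isConnected
  obtain ⟨p, hp, hl⟩ := hc.exists_path_of_dist ℓ u
  have hv : v ∉ p.support := fun hmem =>
    h.ne' (zf_eq_end_of_mem_geodesic hl hmem he.symm)
  have hp1 : (p.concat h).IsPath := zf_isPath_concat hp h hv
  obtain ⟨q, hq, hlq⟩ := hc.exists_path_of_dist ℓ v
  have heq : p.concat h = q := by
    have := hT.IsAcyclic.path_unique ⟨_, hp1⟩ ⟨_, hq⟩
    exact congrArg Subtype.val this
  have := congrArg Walk.length heq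
  rw [Walk.length_concat] at this
  omega

/-- Every vertex at positive distance from `ℓ` has a neighbor one step closer. -/
lemma zf_exists_parent {G : SimpleGraph V} (hc : G.Connected) {ℓ z : V}
    (h : G.dist ℓ z ≠ 0) : ∃ p, G.Adj z p ∧ G.dist ℓ p + 1 = G.dist ℓ z := by
  obtain ⟨q, hq, hl⟩ := hc.exists_path_of_dist ℓ z
  have hnn : ¬ q.reverse.Nil := by
    rw [Walk.nil_iff_length_eq, Walk.length_reverse, hl]
    exact h
  obtain ⟨w, hadj, r, hr⟩ := Walk.not_nil_iff.mp hnn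
  refine ⟨w, hadj, ?_⟩
  have hlen : r.length + 1 = G.dist ℓ z := by
    have := congrArg Walk.length hr
    rw [Walk.length_reverse, hl, Walk.length_cons] at this
    omega
  have h1 : G.dist ℓ w ≤ r.length := by
    have := SimpleGraph.dist_le r
    rwa [SimpleGraph.dist_comm] at this
  have h2 : G.dist ℓ z ≤ G.dist ℓ w + 1 := zf_dist_le_of_adj hc ℓ hadj.symm
  omega


/-- Distance to a leaf from any other vertex goes through its unique neighbor. -/
lemma zf_dist_leaf {G : SimpleGraph V} (hc : G.Connected) {u u' : V}
    (hnb : G.neighborSet u = {u'}) {z : V} (hz : z ≠ u) :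
    G.dist z u = G.dist z u' + 1 := by
  have hadj : G.Adj u u' := by
    have : u' ∈ G.neighborSet u := by rw [hnb]; rfl
    exact this
  have h1 : G.dist z u ≤ G.dist z u' + 1 := zf_dist_le_of_adj hc z hadj.symm
  have hne : G.dist z u ≠ 0 := fun h0 => hz (hc.dist_eq_zero_iff.mp h0)
  obtain ⟨y, hadj2, hy⟩ := zf_exists_parent hc hne
  have hyu : y = u' := by
    have : y ∈ G.neighborSet u := hadj2
    rwa [hnb, Set.mem_singleton_iff] at this
  subst hyu
  omega

/-- In a connected graph, a vertex strongly resolving a pair of leaves is one of them. -/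
lemma zf_resolver_mem {G : SimpleGraph V} (hc : G.Connected) {u v x : V}
    (hu : IsLeaf G u) (hv : IsLeaf G v) (huv : u ≠ v)
    (hx : StronglyResolves G x u v) : x = u ∨ x = v := by
  obtain ⟨u', hu'⟩ := Set.ncard_eq_one.mp hu
  obtain ⟨v', hv'⟩ := Set.ncard_eq_one.mp hv
  rcases hx with h | h
  · left
    by_contra hxu
    have e1 : G.dist x u = G.dist x u' + 1 := zf_dist_leaf hc hu' hxu
    have e2 : G.dist u v = G.dist v u' + 1 := by
      rw [SimpleGraph.dist_comm]
      exact zf_dist_leaf hc hu' (Ne.symm huv)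
    have e3 : G.dist x v ≤ G.dist x u' + G.dist u' v := hc.dist_triangle
    have e4 : G.dist u' v = G.dist v u' := SimpleGraph.dist_comm
    unfold LiesBetween at h
    omega
  · right
    by_contra hxv
    have e1 : G.dist x v = G.dist x v' + 1 := zf_dist_leaf hc hv' hxv
    have e2 : G.dist v u = G.dist u v' + 1 := by
      rw [SimpleGraph.dist_comm]
      exact zf_dist_leaf hc hv' huv
    have e3 : G.dist x u ≤ G.dist x v' + G.dist v' u := hc.dist_triangle
    have e4 : G.dist v' u = G.dist u v' := SimpleGraph.dist_comm
    unfold LiesBetween at h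
    omega

/-- Key lemma: a fixed point of the forcing rule containing all leaves except
possibly `ℓ` must be everything (in a tree with at least two vertices). -/
lemma zf_fixed_point_univ {G : SimpleGraph V} [Fintype V] (hT : G.IsTree)
    (h2 : 2 ≤ Fintype.card V) (ℓ : V) {B : Set V}
    (hB : ∀ v, IsLeaf G v → v ≠ ℓ → v ∈ B)
    (hfix : zfStep G B = B) : B = Set.univ := by
  by_contra hne
  have hc := hT.isConnected
  have hWne : Bᶜ.Nonempty := Set.nonempty_compl.mpr hne
  obtain ⟨w, hw, hmax⟩ := Set.exists_max_image Bᶜ (G.dist ℓ) (Set.toFinite _) hWne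
  by_cases hd0 : G.dist ℓ w = 0
  · have hwl : w = ℓ := (hc.dist_eq_zero_iff.mp hd0).symm
    subst hwl
    obtain ⟨u, hu⟩ := Fintype.exists_ne_of_one_lt_card (by omega) w
    have hdu : G.dist u w ≠ 0 := fun h0 => hu (hc.dist_eq_zero_iff.mp h0)
    obtain ⟨b, hbadj, _⟩ := zf_exists_parent hc hdu
    have hbB : b ∈ B := by
      by_contra hbB
      have h1 := hmax b hbB
      have h2 : G.dist w b = 0 := by omega
      exact hbadj.ne (hc.dist_eq_zero_iff.mp h2)
    have hforce : w ∈ zfStep G B := by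
      refine Set.mem_union_right _ ⟨b, hbB, hbadj.symm, fun x hx hxB => ?_⟩
      have h1 := hmax x hxB
      have h2 : G.dist w x = 0 := by omega
      exact (hc.dist_eq_zero_iff.mp h2).symm
    rw [hfix] at hforce
    exact hw hforce
  · have hwl : w ≠ ℓ := fun h => by
      subst h
      exact hd0 (by simp [SimpleGraph.dist_self])
    obtain ⟨p, hpar, hppar⟩ := zf_exists_parent hc hd0
    by_cases hup : ∃ b, G.Adj w b ∧ G.dist ℓ b = G.dist ℓ w + 1
    · obtain ⟨b, hwb, hdb⟩ := hup
      have hbB : b ∈ B := by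
        by_contra hbB
        have := hmax b hbB
        omega
      have hforce : w ∈ zfStep G B := by
        refine Set.mem_union_right _ ⟨b, hbB, hwb.symm, fun x hbx hxB => ?_⟩
        have h1 := hmax x hxB
        have h2 : G.dist ℓ b ≤ G.dist ℓ x + 1 := zf_dist_le_of_adj hc ℓ hbx.symm
        by_contra hxw
        exact zf_no_two_parents hT hxw hbx hwb.symm (by omega) rfl hdb
      rw [hfix] at hforce
      exact hw hforce
    · push_neg at hup
      have hall : ∀ y, G.Adj w y → y = p := by
        intro y hy
        have h1 : G.dist ℓ y ≤ G.dist ℓ w + 1 := zf_dist_le_of_adj hc ℓ hy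
        have h2 := hup y hy
        have h3 : G.dist ℓ w ≠ G.dist ℓ y := zf_dist_ne_of_adj hT ℓ hy
        have h4 : G.dist ℓ w ≤ G.dist ℓ y + 1 := zf_dist_le_of_adj hc ℓ hy.symm
        by_contra hyp
        exact zf_no_two_parents hT (k := G.dist ℓ p) hyp hy hpar (by omega) rfl (by omega)
      have hleaf : IsLeaf G w := by
        rw [IsLeaf, Set.ncard_eq_one]
        exact ⟨p, Set.eq_singleton_iff_unique_mem.mpr ⟨hpar, fun y hy => hall y hy⟩⟩
      exact hw (hB w hleaf hwl)

lemma zf_subset_iterate {G : SimpleGraph V} (S : Set V) (k : ℕ) :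
    S ⊆ (zfStep G)^[k] S := by
  induction k with
  | zero => simp
  | succ n ih =>
    rw [Function.iterate_succ_apply']
    exact ih.trans Set.subset_union_left

lemma zf_exists_fixed {G : SimpleGraph V} [Fintype V] (S : Set V) :
    ∃ k, zfStep G ((zfStep G)^[k] S) = (zfStep G)^[k] S := by
  by_contra h
  push_neg at h
  have hgrow : ∀ k, k ≤ ((zfStep G)^[k] S).ncard := by
    intro k
    induction k with
    | zero => omega
    | succ n ih =>
      have hsub : (zfStep G)^[n] S ⊆ (zfStep G)^[n + 1] S := by
        rw [Function.iterate_succ_apply']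
        exact Set.subset_union_left
      have hne' : (zfStep G)^[n] S ≠ (zfStep G)^[n + 1] S := by
        rw [Function.iterate_succ_apply']
        exact fun he => h n he.symm
      have := Set.ncard_lt_ncard (hsub.ssubset_of_ne hne') (Set.toFinite _)
      omega
  have h1 := hgrow (Fintype.card V + 1)
  have h2 : ((zfStep G)^[Fintype.card V + 1] S).ncard ≤ Fintype.card V := by
    have := Set.ncard_le_ncard (Set.subset_univ ((zfStep G)^[Fintype.card V + 1] S))
      (Set.toFinite _)
    rwa [Set.ncard_univ, Nat.card_eq_fintype_card] at this
  omega

end Aux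

/-- For any tree, the zero forcing number is at most the strong metric dimension. -/
theorem zeroForcingNumber_le_sdim_of_tree {V : Type*} [Fintype V]
    (T : SimpleGraph V) (hT : T.IsTree) (h2 : 2 ≤ Fintype.card V) :
    zeroForcingNumber T ≤ sdim T := by
  classical
  have hc := hT.isConnected
  have hnv : Nonempty V := Fintype.card_pos_iff.mp (by omega)
  have hmem : sdim T ∈ {n | ∃ W : Set V, W.ncard = n ∧ IsStrongResolvingSet T W} :=
    Nat.sInf_mem ⟨(Set.univ : Set V).ncard, Set.univ, rfl,
      fun u v huv => ⟨u, trivial, Or.inl (by simp [LiesBetween, SimpleGraph.dist_self])⟩⟩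
  obtain ⟨W, hWcard, hWres⟩ := hmem
  have hleaves : ∃ ℓ : V, ∀ v, IsLeaf T v → v ≠ ℓ → v ∈ W := by
    by_cases hall : ∀ v, IsLeaf T v → v ∈ W
    · exact ⟨Classical.arbitrary V, fun v hv _ => hall v hv⟩
    · push_neg at hall
      obtain ⟨ℓ, hlf, hlW⟩ := hall
      refine ⟨ℓ, fun v hv hvl => ?_⟩
      obtain ⟨x, hxW, hxr⟩ := hWres ℓ v (Ne.symm hvl)
      rcases zf_resolver_mem hc hlf hv (Ne.symm hvl) hxr with h | h
      · exact absurd (h ▸ hxW) hlW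
      · exact h ▸ hxW
  obtain ⟨ℓ, hℓ⟩ := hleaves
  have hzf : IsZeroForcingSet T W := by
    obtain ⟨k, hk⟩ := zf_exists_fixed (G := T) W
    exact ⟨k, zf_fixed_point_univ hT h2 ℓ
      (fun v hv hvl => zf_subset_iterate W k (hℓ v hv hvl)) hk⟩
  exact Nat.sInf_le ⟨W, hWcard, hzf⟩
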